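/- arXiv:2206.02599 — 3 statements merged into one kernel-verified Lean document; each statement's English description precedes it below -/
import Mathlib

section
/- Let α : [0,∞) → [0,∞) be a differentiable, strictly increasing bijection with α(0) = 0, and suppose there exist constants 0 < c ≤ C and T ≥ 0 such that c ≤ α'(t) ≤ C for all t ≥ T. Let β₁ : [0,∞) → (0,∞) be antitone (weakly decreasing), and let β₂ : [0,∞) → (0,∞) satisfy m·β₁(α(t)) ≤ β₂(t) ≤ M·β₁(α(t)) for all sufficiently large t, with constants 0 < m ≤ M. Then there exist constants C₁, C₂ > 0 and K₁, K₂ > 0 such that β₂(t) ≤ K₁·β₁(C₁ t) and β₁(t) ≤ K₂·β₂(C₂ t) for all sufficiently large t. (Hence any two essential convergence rates of the same equivalence class of ODEs agree up to linear rescalings of time.) -/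
/-- Linear lower/upper bounds from derivative bounds. -/
lemma lin_bounds (α : ℝ → ℝ) (hdiff : Differentiable ℝ α) (c C T : ℝ)
    (hder : ∀ t ≥ T, c ≤ deriv α t ∧ deriv α t ≤ C) :
    ∀ s ≥ T, α T + c * (s - T) ≤ α s ∧ α s ≤ α T + C * (s - T) := by
  have hd1 : ∀ x : ℝ, HasDerivAt (fun s => α s - c * s) (deriv α x - c) x := fun x => by
    have := (hdiff x).hasDerivAt.sub ((hasDerivAt_id x).const_mul c)
    simp only [id_eq, mul_one] at this
    exact this
  have hd2 : ∀ x : ℝ, HasDerivAt (fun s => C * s - α s) (C - deriv α x) x := fun x => by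
    have := ((hasDerivAt_id x).const_mul C).sub (hdiff x).hasDerivAt
    simp only [id_eq, mul_one] at this
    exact this
  have hlow : MonotoneOn (fun s => α s - c * s) (Set.Ici T) := by
    apply monotoneOn_of_deriv_nonneg (convex_Ici T)
    · exact ((hdiff.continuous.sub (continuous_const.mul continuous_id)).continuousOn)
    · exact fun x _ => (hd1 x).differentiableAt.differentiableWithinAt
    · intro x hx
      rw [interior_Ici] at hx
      rw [(hd1 x).deriv]
      linarith [(hder x (le_of_lt hx)).1]
  have hhigh : MonotoneOn (fun s => C * s - α s) (Set.Ici T) := by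
    apply monotoneOn_of_deriv_nonneg (convex_Ici T)
    · exact (((continuous_const.mul continuous_id).sub hdiff.continuous).continuousOn)
    · exact fun x _ => (hd2 x).differentiableAt.differentiableWithinAt
    · intro x hx
      rw [interior_Ici] at hx
      rw [(hd2 x).deriv]
      linarith [(hder x (le_of_lt hx)).2]
  intro s hs
  have h1 := hlow (Set.self_mem_Ici) (Set.mem_Ici.mpr hs) hs
  have h2 := hhigh (Set.self_mem_Ici) (Set.mem_Ici.mpr hs) hs
  constructor <;> simp only at h1 h2 <;> nlinarith

/-- Well-definedness of the essential convergence rate: if `α` is a differentiable,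
strictly increasing bijection of `[0,∞)` onto itself with `α 0 = 0` and
`c ≤ α' ≤ C` for `t ≥ T` (`0 < c ≤ C`), `β₁` is a positive antitone rate, and
`β₂(t) = Θ(β₁(α t))` (i.e. `m β₁(α t) ≤ β₂ t ≤ M β₁(α t)` eventually), then the two
rates agree up to linear rescalings of time: `β₂(t) ≤ K₁ β₁(C₁ t)` and
`β₁(t) ≤ K₂ β₂(C₂ t)` for all sufficiently large `t`. -/
theorem essential_rate_well_defined
    (α : ℝ → ℝ) (hdiff : Differentiable ℝ α) (h0 : α 0 = 0)
    (hmono : StrictMonoOn α (Set.Ici 0))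
    (hbij : Set.BijOn α (Set.Ici 0) (Set.Ici 0))
    (c C T : ℝ) (hc : 0 < c) (hcC : c ≤ C) (hT : 0 ≤ T)
    (hder : ∀ t ≥ T, c ≤ deriv α t ∧ deriv α t ≤ C)
    (β₁ β₂ : ℝ → ℝ)
    (hβ₁pos : ∀ t ≥ (0 : ℝ), 0 < β₁ t) (hβ₂pos : ∀ t ≥ (0 : ℝ), 0 < β₂ t)
    (hβ₁anti : AntitoneOn β₁ (Set.Ici 0))
    (m M : ℝ) (hm : 0 < m) (hmM : m ≤ M)
    (hcomp : ∀ᶠ t in Filter.atTop, m * β₁ (α t) ≤ β₂ t ∧ β₂ t ≤ M * β₁ (α t)) :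
    ∃ C₁ > (0 : ℝ), ∃ C₂ > (0 : ℝ), ∃ K₁ > (0 : ℝ), ∃ K₂ > (0 : ℝ),
      (∀ᶠ t in Filter.atTop, β₂ t ≤ K₁ * β₁ (C₁ * t)) ∧
      (∀ᶠ t in Filter.atTop, β₁ t ≤ K₂ * β₂ (C₂ * t)) := by
  have hC : 0 < C := lt_of_lt_of_le hc hcC
  have hlin := lin_bounds α hdiff c C T hder
  have hαT : 0 ≤ α T := hbij.mapsTo (Set.mem_Ici.mpr hT)
  have hαnonneg : ∀ s ≥ (0:ℝ), 0 ≤ α s := fun s hs => hbij.mapsTo (Set.mem_Ici.mpr hs)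
  obtain ⟨N, hN⟩ := Filter.eventually_atTop.mp hcomp
  refine ⟨c/2, by positivity, 1/(2*C), by positivity, M, lt_of_lt_of_le hm hmM, 1/m,
    by positivity, ?_, ?_⟩
  · -- β₂ t ≤ M * β₁ ((c/2) * t)
    rw [Filter.eventually_atTop]
    refine ⟨max (max N T) (2 * T), fun t ht => ?_⟩
    have htN : N ≤ t := le_trans (le_max_left _ _) (le_trans (le_max_left _ _) ht)
    have htT : T ≤ t := le_trans (le_max_right _ _) (le_trans (le_max_left _ _) ht)
    have ht3 : 2 * T ≤ t := le_trans (le_max_right _ _) ht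
    have ht0 : 0 ≤ t := le_trans hT htT
    have h1 := (hlin t htT).1
    have hkey : c / 2 * t ≤ α t := by nlinarith [mul_le_mul_of_nonneg_left ht3 hc.le]
    have hmem1 : (c/2 * t) ∈ Set.Ici (0:ℝ) := Set.mem_Ici.mpr (by positivity)
    have hmem2 : α t ∈ Set.Ici (0:ℝ) := Set.mem_Ici.mpr (hαnonneg t ht0)
    have hβ := hβ₁anti hmem1 hmem2 hkey
    have h2 := (hN t htN).2
    nlinarith [hβ₁pos (α t) (hαnonneg t ht0)]
  · -- β₁ t ≤ (1/m) * β₂ (t/(2C))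
    rw [Filter.eventually_atTop]
    refine ⟨max (max (2*C*N) (2*C*T)) (2 * α T), fun t ht => ?_⟩
    have ht1 : 2*C*N ≤ t := le_trans (le_max_left _ _) (le_trans (le_max_left _ _) ht)
    have ht2 : 2*C*T ≤ t := le_trans (le_max_right _ _) (le_trans (le_max_left _ _) ht)
    have ht3 : 2 * α T ≤ t := le_trans (le_max_right _ _) ht
    have ht0 : 0 ≤ t := le_trans (by positivity) ht3
    set s := 1/(2*C) * t with hs
    have hsN : N ≤ s := by
      rw [hs, div_mul_eq_mul_div, le_div_iff₀ (by positivity)]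
      nlinarith
    have hsT : T ≤ s := by
      rw [hs, div_mul_eq_mul_div, le_div_iff₀ (by positivity)]
      nlinarith
    have hs0 : 0 ≤ s := le_trans hT hsT
    have h2 := (hlin s hsT).2
    have hst : α s ≤ t := by
      have hCs : C * s = t / 2 := by rw [hs]; field_simp
      nlinarith
    have hβ := hβ₁anti (Set.mem_Ici.mpr (hαnonneg s hs0)) (Set.mem_Ici.mpr ht0) hst
    have h1 := (hN s hsN).1
    have := hβ₁pos (α s) (hαnonneg s hs0)
    rw [div_mul_eq_mul_div, le_div_iff₀ hm]
    nlinarith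
end

section
/- Let f : ℝ^d → ℝ be convex and differentiable, let x* ∈ ℝ^d be a minimizer of f with f* := f(x*), and let τ₀ > 0. Suppose X, Z : [τ₀, ∞) → ℝ^d are differentiable and satisfy X'(τ) = (Z(τ) − X(τ))/τ and Z'(τ) = −∇f(X(τ)) for all τ ≥ τ₀. Then the Lyapunov function E(τ) := τ·(f(X(τ)) − f*) + (1/2)·‖Z(τ) − x*‖² is nonincreasing on [τ₀, ∞); consequently f(X(τ)) − f* ≤ E(τ₀)/τ for all τ ≥ τ₀, i.e., f(X(τ)) − f* = O(1/τ). -/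
open InnerProductSpace

/-- gradient inequality for convex differentiable functions -/
lemma grad_ineq_aux {d : ℕ} (f : EuclideanSpace ℝ (Fin d) → ℝ)
    (hconv : ConvexOn ℝ Set.univ f) (hdiff : Differentiable ℝ f)
    (x y : EuclideanSpace ℝ (Fin d)) :
    f x + inner ℝ (gradient f x) (y - x) ≤ f y := by
  rcases eq_or_ne y x with rfl | hne
  · simp
  set g : ℝ → ℝ := fun t => f (x + t • (y - x)) with hg
  have hline : ∀ t : ℝ, HasDerivAt (fun t : ℝ => x + t • (y - x)) (y - x) t := by
    intro t
    simpa using ((hasDerivAt_id t).smul_const (y - x)).const_add x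
  have hgd : ∀ t : ℝ, HasDerivAt g (inner ℝ (gradient f (x + t • (y - x))) (y - x)) t := by
    intro t
    have h1 := (hdiff (x + t • (y - x))).hasFDerivAt.comp_hasDerivAt t (hline t)
    have : (fderiv ℝ f (x + t • (y - x))) (y - x)
        = inner ℝ (gradient f (x + t • (y - x))) (y - x) := by
      rw [gradient]
      simp
    rwa [this] at h1
  have hgc : ConvexOn ℝ Set.univ g := by
    have := hconv.comp_affineMap (AffineMap.lineMap x y : ℝ →ᵃ[ℝ] _)
    have heq : g = f ∘ (AffineMap.lineMap x y : ℝ →ᵃ[ℝ] _) := by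
      funext t; simp [g, AffineMap.lineMap_apply_module]
      congr 1
      module
    rw [heq]
    simpa using this
  have hslope := hgc.le_slope_of_hasDerivAt (Set.mem_univ (0:ℝ)) (Set.mem_univ (1:ℝ))
    one_pos (hgd 0)
  rw [slope_def_field] at hslope
  have h0 : g 0 = f x := by simp [g]
  have h1 : g 1 = f y := by simp [g]
  simp only [h0, h1] at hslope
  have hx0 : x + (0:ℝ) • (y - x) = x := by simp
  rw [hx0] at hslope
  linarith [hslope]

/-- Lyapunov analysis for the system `Ẋ = (Z - X)/τ`, `Ż = -∇f(X)`: for convex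
differentiable `f` with minimizer `x*`, the function
`E(τ) = τ (f(X τ) - f*) + ½‖Z τ - x*‖²` is nonincreasing on `[τ₀, ∞)`, and hence
`f(X τ) - f* ≤ E(τ₀)/τ` for all `τ ≥ τ₀`, i.e. `f(X τ) - f* = O(1/τ)`. -/
theorem lyapunov_rate_first_order_system {d : ℕ}
    (f : EuclideanSpace ℝ (Fin d) → ℝ)
    (hconv : ConvexOn ℝ Set.univ f) (hdiff : Differentiable ℝ f)
    (xstar : EuclideanSpace ℝ (Fin d)) (hmin : ∀ x, f xstar ≤ f x)
    (τ₀ : ℝ) (hτ₀ : 0 < τ₀)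
    (X Z : ℝ → EuclideanSpace ℝ (Fin d))
    (hX : ∀ τ ≥ τ₀, HasDerivAt X (τ⁻¹ • (Z τ - X τ)) τ)
    (hZ : ∀ τ ≥ τ₀, HasDerivAt Z (-(gradient f (X τ))) τ) :
    AntitoneOn (fun τ => τ * (f (X τ) - f xstar) + (1 / 2) * ‖Z τ - xstar‖ ^ 2)
        (Set.Ici τ₀) ∧
      ∀ τ ≥ τ₀, f (X τ) - f xstar ≤
        (τ₀ * (f (X τ₀) - f xstar) + (1 / 2) * ‖Z τ₀ - xstar‖ ^ 2) / τ := by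
  set E : ℝ → ℝ := fun τ => τ * (f (X τ) - f xstar) + (1 / 2) * ‖Z τ - xstar‖ ^ 2 with hE_def
  have hE : ∀ τ ∈ Set.Ici τ₀, HasDerivAt E
      ((f (X τ) - f xstar) + inner ℝ (gradient f (X τ)) (xstar - X τ)) τ := by
    intro τ hτ
    have hτpos : 0 < τ := lt_of_lt_of_le hτ₀ hτ
    have h1 : HasDerivAt (fun t => f (X t))
        (inner ℝ (gradient f (X τ)) (τ⁻¹ • (Z τ - X τ))) τ := by
      have h := (hdiff (X τ)).hasFDerivAt.comp_hasDerivAt τ (hX τ hτ)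
      have he : (fderiv ℝ f (X τ)) (τ⁻¹ • (Z τ - X τ))
          = inner ℝ (gradient f (X τ)) (τ⁻¹ • (Z τ - X τ)) := by
        rw [gradient]; simp
      rwa [he] at h
    have hfirst : HasDerivAt (fun t => t * (f (X t) - f xstar))
        (1 * (f (X τ) - f xstar) + τ * inner ℝ (gradient f (X τ)) (τ⁻¹ • (Z τ - X τ))) τ :=
      (hasDerivAt_id τ).mul (h1.sub_const _)
    have hzs : HasDerivAt (fun t => Z t - xstar) (-(gradient f (X τ))) τ :=
      (hZ τ hτ).sub_const _
    have hin : HasDerivAt (fun t => inner ℝ (Z t - xstar) (Z t - xstar) : ℝ → ℝ)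
        (inner ℝ (Z τ - xstar) (-(gradient f (X τ)))
          + inner ℝ (-(gradient f (X τ))) (Z τ - xstar)) τ := hzs.inner ℝ hzs
    have hsecond : HasDerivAt (fun t => (1/2) * ‖Z t - xstar‖ ^ 2)
        ((1/2) * (inner ℝ (Z τ - xstar) (-(gradient f (X τ)))
          + inner ℝ (-(gradient f (X τ))) (Z τ - xstar))) τ := by
      have heq : (fun t => (1/2 : ℝ) * ‖Z t - xstar‖ ^ 2)
          = fun t => (1/2 : ℝ) * (inner ℝ (Z t - xstar) (Z t - xstar) : ℝ) := by
        funext t; rw [real_inner_self_eq_norm_sq]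
      rw [heq]
      exact hin.const_mul _
    have hsum := hfirst.add hsecond
    have hval : 1 * (f (X τ) - f xstar) + τ * inner ℝ (gradient f (X τ)) (τ⁻¹ • (Z τ - X τ))
        + (1/2) * (inner ℝ (Z τ - xstar) (-(gradient f (X τ)))
          + inner ℝ (-(gradient f (X τ))) (Z τ - xstar))
        = (f (X τ) - f xstar) + inner ℝ (gradient f (X τ)) (xstar - X τ) := by
      have hτne : τ ≠ 0 := ne_of_gt hτpos
      have hsm : τ * (inner ℝ (gradient f (X τ)) (τ⁻¹ • (Z τ - X τ)) : ℝ)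
          = inner ℝ (gradient f (X τ)) (Z τ - X τ) := by
        rw [real_inner_smul_right, ← mul_assoc, mul_inv_cancel₀ hτne, one_mul]
      simp only [hsm, inner_neg_right, real_inner_comm (Z τ - xstar)]
      have hd : (inner ℝ (gradient f (X τ)) (Z τ - X τ) : ℝ)
          - inner ℝ (gradient f (X τ)) (Z τ - xstar)
          = inner ℝ (gradient f (X τ)) (xstar - X τ) := by
        rw [← inner_sub_right]
        congr 1
        abel
      linarith [hd, real_inner_comm (Z τ - xstar) (gradient f (X τ))]
    rwa [hval] at hsum
  have hnonpos : ∀ τ ∈ Set.Ici τ₀,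
      (f (X τ) - f xstar) + inner ℝ (gradient f (X τ)) (xstar - X τ) ≤ 0 := by
    intro τ _
    have := grad_ineq_aux f hconv hdiff (X τ) xstar
    linarith
  have hanti : AntitoneOn E (Set.Ici τ₀) := by
    apply antitoneOn_of_deriv_nonpos (convex_Ici τ₀)
    · exact fun τ hτ => (hE τ hτ).continuousAt.continuousWithinAt
    · intro τ hτ
      rw [interior_Ici] at hτ
      exact (hE τ (Set.mem_Ici.mpr (le_of_lt (Set.mem_Ioi.mp hτ)))).differentiableAt.differentiableWithinAt
    · intro τ hτ
      rw [interior_Ici] at hτ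
      rw [(hE τ (Set.mem_Ici.mpr (le_of_lt (Set.mem_Ioi.mp hτ)))).deriv]
      exact hnonpos τ (Set.mem_Ici.mpr (le_of_lt (Set.mem_Ioi.mp hτ)))
  refine ⟨hanti, fun τ hτ => ?_⟩
  have hτpos : 0 < τ := lt_of_lt_of_le hτ₀ hτ
  have h1 : τ * (f (X τ) - f xstar) ≤ E τ := by
    have : (0:ℝ) ≤ (1/2) * ‖Z τ - xstar‖ ^ 2 := by positivity
    simp only [hE_def]; linarith
  have h2 : E τ ≤ E τ₀ := hanti (Set.self_mem_Ici) hτ hτ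
  rw [le_div_iff₀ hτpos, mul_comm]
  exact h1.trans h2
end

section
/- Let f : ℝ^d → ℝ be convex and differentiable with minimizer x* and minimum value f*, let τ₀ > 0, and let X, Z : [τ₀, ∞) → ℝ^d be differentiable with X'(τ) = (Z(τ) − X(τ))/τ, Z'(τ) = −∇f(X(τ)), and f(X(τ)) − f* ≤ C/τ for all τ ≥ τ₀. Let η : [t₀, ∞) → ℝ be differentiable and monotonically increasing with e^{η(t₀)} ≥ τ₀, and set γ(t) := (d/dt) e^{η(t)}. Then x(t) := X(e^{η(t)}) and z(t) := Z(e^{η(t)}) satisfy x'(t) = (γ(t)/e^{η(t)})·(z(t) − x(t)) and z'(t) = −γ(t)·∇f(x(t)), and f(x(t)) − f* ≤ C·e^{−η(t)} for all t ≥ t₀; i.e., f(x(t)) − f* = O(e^{−η(t)}). -/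
/-- Time rescaling `τ = e^{η(t)}` of the system `Ẋ = (Z - X)/τ`, `Ż = -∇f(X)` with rate
`O(1/τ)` yields the accelerated system of Wibisono et al.:
`x(t) := X(e^{η(t)})`, `z(t) := Z(e^{η(t)})` satisfy
`ẋ = (γ(t)/e^{η(t)})(z - x)`, `ż = -γ(t)∇f(x)` with `γ(t) = (d/dt)e^{η(t)}`, and
`f(x(t)) - f* ≤ C e^{-η(t)}`. -/
theorem time_rescaled_accelerated_system {d : ℕ}
    (f : EuclideanSpace ℝ (Fin d) → ℝ)
    (hconv : ConvexOn ℝ Set.univ f) (hdiff : Differentiable ℝ f)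
    (xstar : EuclideanSpace ℝ (Fin d)) (hmin : ∀ x, f xstar ≤ f x)
    (τ₀ : ℝ) (hτ₀ : 0 < τ₀)
    (X Z : ℝ → EuclideanSpace ℝ (Fin d))
    (hX : ∀ τ ≥ τ₀, HasDerivAt X (τ⁻¹ • (Z τ - X τ)) τ)
    (hZ : ∀ τ ≥ τ₀, HasDerivAt Z (-(gradient f (X τ))) τ)
    (C : ℝ) (hrate : ∀ τ ≥ τ₀, f (X τ) - f xstar ≤ C / τ)
    (t₀ : ℝ) (η : ℝ → ℝ)
    (hηdiff : ∀ t ≥ t₀, DifferentiableAt ℝ η t)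
    (hηmono : MonotoneOn η (Set.Ici t₀))
    (hη₀ : τ₀ ≤ Real.exp (η t₀))
    (γ : ℝ → ℝ)
    (hγ : ∀ t ≥ t₀, HasDerivAt (fun s => Real.exp (η s)) (γ t) t) :
    ∀ t ≥ t₀,
      HasDerivAt (fun s => X (Real.exp (η s)))
        ((γ t / Real.exp (η t)) • (Z (Real.exp (η t)) - X (Real.exp (η t)))) t ∧
      HasDerivAt (fun s => Z (Real.exp (η s)))
        (-γ t • gradient f (X (Real.exp (η t)))) t ∧
      f (X (Real.exp (η t))) - f xstar ≤ C * Real.exp (-η t) := by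
  intro t ht
  have hτ : τ₀ ≤ Real.exp (η t) :=
    hη₀.trans (Real.exp_le_exp.mpr (hηmono Set.self_mem_Ici ht ht))
  have hτpos : 0 < Real.exp (η t) := Real.exp_pos _
  refine ⟨?_, ?_, ?_⟩
  · have := ((hX _ hτ).scomp t (hγ t ht))
    convert this using 1
    · rfl
    · rfl
    · rfl
    · rfl
    rw [smul_smul, div_eq_mul_inv]
  · have := ((hZ _ hτ).scomp t (hγ t ht))
    convert this using 1
    · rfl
    · rfl
    · rfl
    · rfl
    rw [smul_neg, neg_smul]
  · have := hrate _ hτ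
    rwa [Real.exp_neg, div_eq_mul_inv] at *
end
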